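/- If the vectors α₁, α₀, α₋₁ ∈ ℝ^K are linearly independent and |ρ| < 1, then the lag-2 covariance matrix C₂ = c u vᵀ of model (M) is not a symmetric matrix; hence the space-time covariance function of model (M) is not fully symmetric and therefore not separable. -/

import Mathlib

open Matrix

/-- under linear independence of the loading vectors, the lag-2 covariance
`C₂ = c u vᵀ` of model (M) is not symmetric (hence the space-time covariance function is
not fully symmetric and not separable). -/
theorem stmt_7 {K : ℕ} (hK : 1 ≤ K)
    (ρ σ : ℝ) (hρ : |ρ| < 1) (hσ : 0 < σ)
    (α1 α0 αm1 : Fin K → ℝ)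
    (hli : LinearIndependent ℝ ![α1, α0, αm1])
    (c : ℝ) (hc : c = σ ^ 2 / (1 - ρ ^ 2))
    (u v : Fin K → ℝ)
    (hu : u = α1 + ρ • α0 + ρ ^ 2 • αm1)
    (hv : v = ρ ^ 2 • α1 + ρ • α0 + αm1)
    (C2 : Matrix (Fin K) (Fin K) ℝ)
    (hC2 : C2 = c • vecMulVec u v) :
    ¬ C2.IsSymm := by
  obtain ⟨hρ1, hρ2⟩ := abs_lt.mp hρ
  have hρsq : ρ ^ 2 < 1 := by nlinarith
  have hcpos : 0 < c := by
    rw [hc]; exact div_pos (by positivity) (by nlinarith)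
  have hli' := Fintype.linearIndependent_iff.mp hli
  intro hsym
  -- u ≠ 0
  have hune : u ≠ 0 := by
    intro h
    have h1 := hli' ![1, ρ, ρ ^ 2] (by
      simpa [Fin.sum_univ_three, ← hu] using h) 0
    simp at h1
  obtain ⟨i0, hi0⟩ : ∃ i, u i ≠ 0 := by
    by_contra h
    push_neg at h
    exact hune (funext h)
  -- entrywise symmetry
  have hent : ∀ i j, u i * v j = u j * v i := by
    intro i j
    have := hsym.apply j i
    rw [hC2] at this
    simp only [Matrix.smul_apply, Matrix.vecMulVec_apply, smul_eq_mul] at this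
    exact mul_left_cancel₀ (ne_of_gt hcpos) this
  set lam := v i0 / u i0 with hlam
  have hvlam : ∀ j, v j = lam * u j := by
    intro j
    have := hent i0 j
    field_simp [hlam]
    rw [hlam, div_mul_eq_mul_div, eq_div_iff hi0]
    linarith [hent i0 j]
  -- linear combination is zero
  have hcomb : (ρ ^ 2 - lam) • α1 + (ρ - lam * ρ) • α0 + (1 - lam * ρ ^ 2) • αm1 = 0 := by
    funext j
    have h1 := hvlam j
    rw [hv, hu] at h1
    simp only [Pi.add_apply, Pi.smul_apply, smul_eq_mul] at h1
    simp only [Pi.add_apply, Pi.smul_apply, smul_eq_mul, Pi.zero_apply]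
    nlinarith [h1]
  have hg := hli' ![ρ ^ 2 - lam, ρ - lam * ρ, 1 - lam * ρ ^ 2] (by
    simpa [Fin.sum_univ_three] using hcomb)
  have h0 := hg 0
  have h1 := hg 1
  have h2 := hg 2
  simp at h0 h1 h2
  -- ρ² = lam, ρ = lam ρ, lam ρ² = 1
  nlinarith [h0, h2, sq_nonneg ρ]
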